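/- The total free energy decreases along every positive solution of the closed compartmental reaction–diffusion model: if X = (x^1,…,x^N) : [0,∞) → ℝ^{mN} is differentiable, all compartments of X(t) are componentwise positive for all t ≥ 0, and X satisfies ẋ^k_i(t) = −(1/m0_k) Σ_{j=1}^{N_e} D_{j k} m1_j r_{j,i}(X(t)) (Σ_{l=1}^N D_{j l} x^l_i(t)/x*_i) + f_i(x^k(t)) for all k and i, then the function t ↦ G_d(X(t)) = Σ_{k=1}^N m0_k G(x^k(t)) is differentiable with nonpositive derivative at every t ≥ 0. -/

import Mathlib

open Matrix Real

private lemma sum_pm {n : ℕ} {cf g : Fin n → ℝ} {p q : Fin n} (hpq : p ≠ q)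
    (hp : cf p = 1) (hq : cf q = -1) (h0 : ∀ l, l ≠ p → l ≠ q → cf l = 0) :
    ∑ l, cf l * g l = g p - g q := by
  have key : ∀ l, cf l * g l = (if l = p then g p else 0) + (if l = q then -g q else 0) := by
    intro l
    by_cases h1 : l = p
    · subst h1; simp [hp, hpq]
    · by_cases h2 : l = q
      · subst h2; simp [hq, h1]
      · simp [h0 l h1 h2, h1, h2]
  rw [Finset.sum_congr rfl fun l _ => key l, Finset.sum_add_distrib]
  simp [sub_eq_add_neg]

private lemma log_mul_nonneg {u v : ℝ} (hu : 0 < u) (hv : 0 < v) :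
    0 ≤ (Real.log u - Real.log v) * (u - v) := by
  rcases le_total u v with h | h
  · nlinarith [Real.log_le_log hu h]
  · nlinarith [Real.log_le_log hv h]

private lemma exp_mul_nonneg (a b : ℝ) : 0 ≤ (a - b) * (Real.exp a - Real.exp b) := by
  rcases le_total a b with h | h
  · nlinarith [Real.exp_le_exp.2 h]
  · nlinarith [Real.exp_le_exp.2 h]

private lemma quad_nonneg {c r : ℕ} {hd tl : Fin r → Fin c} (hht : ∀ j, hd j ≠ tl j)
    (B : Matrix (Fin c) (Fin r) ℝ)
    (hB : ∀ i j, B i j = if i = hd j then 1 else if i = tl j then -1 else 0)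
    (κ : Fin r → ℝ) (hκ : ∀ j, 0 < κ j) (γ : Fin c → ℝ) :
    0 ≤ γ ⬝ᵥ ((B * Matrix.diagonal κ * Bᵀ) *ᵥ fun ρ => Real.exp (γ ρ)) := by
  have hcol : ∀ (j : Fin r) (g : Fin c → ℝ), ∑ i, B i j * g i = g (hd j) - g (tl j) := by
    intro j g
    refine sum_pm (hht j) ?_ ?_ ?_
    · rw [hB]; simp
    · rw [hB]; simp [(hht j).symm]
    · intro l h1 h2; rw [hB]; simp [h1, h2]
  have e1 : ((B * Matrix.diagonal κ * Bᵀ) *ᵥ fun ρ => Real.exp (γ ρ))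
      = B *ᵥ (Matrix.diagonal κ *ᵥ (Bᵀ *ᵥ fun ρ => Real.exp (γ ρ))) := by
    rw [Matrix.mulVec_mulVec, Matrix.mulVec_mulVec]
  rw [e1, Matrix.dotProduct_mulVec]
  show 0 ≤ ∑ j, (γ ᵥ* B) j *
      ((Matrix.diagonal κ *ᵥ (Bᵀ *ᵥ fun ρ => Real.exp (γ ρ))) j)
  apply Finset.sum_nonneg
  intro j _
  have hvB : (γ ᵥ* B) j = γ (hd j) - γ (tl j) := by
    have : (γ ᵥ* B) j = ∑ i, B i j * γ i := by
      simp [Matrix.vecMul, dotProduct, mul_comm]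
    rw [this, hcol j γ]
  have hu : (Bᵀ *ᵥ fun ρ => Real.exp (γ ρ)) j
      = Real.exp (γ (hd j)) - Real.exp (γ (tl j)) := by
    have : (Bᵀ *ᵥ fun ρ => Real.exp (γ ρ)) j = ∑ i, B i j * Real.exp (γ i) := by
      simp [Matrix.mulVec, dotProduct, Matrix.transpose_apply]
    rw [this, hcol j fun i => Real.exp (γ i)]
  rw [Matrix.mulVec_diagonal, hvB, hu]
  have h1 := exp_mul_nonneg (γ (hd j)) (γ (tl j))
  nlinarith [(hκ j).le, mul_nonneg (hκ j).le h1]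

private lemma reaction_nonneg {m c r : ℕ} {hd tl : Fin r → Fin c} (hht : ∀ j, hd j ≠ tl j)
    (B : Matrix (Fin c) (Fin r) ℝ)
    (hB : ∀ i j, B i j = if i = hd j then 1 else if i = tl j then -1 else 0)
    (κ : Fin r → ℝ) (hκ : ∀ j, 0 < κ j)
    (Z : Matrix (Fin m) (Fin c) ℝ) (L : Fin m → ℝ) :
    0 ≤ ∑ i, L i * ((Z * B * Matrix.diagonal κ * Bᵀ).mulVec
        (fun ρ => Real.exp (Zᵀ.mulVec L ρ))) i := by
  have e1 : Z * B * Matrix.diagonal κ * Bᵀ = Z * (B * Matrix.diagonal κ * Bᵀ) := by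
    rw [Matrix.mul_assoc, Matrix.mul_assoc, Matrix.mul_assoc]
  show 0 ≤ L ⬝ᵥ ((Z * B * Matrix.diagonal κ * Bᵀ) *ᵥ fun ρ => Real.exp ((Zᵀ *ᵥ L) ρ))
  rw [e1, ← Matrix.mulVec_mulVec, Matrix.dotProduct_mulVec, ← Matrix.mulVec_transpose]
  exact quad_nonneg hht B hB κ hκ (Zᵀ *ᵥ L)

private lemma gHasDeriv {b a : ℝ} (hb : 0 < b) (ha : 0 < a) :
    HasDerivAt (fun y => y * Real.log (y / b) + b - y) (Real.log (a / b)) a := by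
  have h1 : HasDerivAt (fun y : ℝ => y / b) (1 / b) a := by
    simpa using (hasDerivAt_id a).div_const b
  have h2 : HasDerivAt (fun y : ℝ => Real.log (y / b)) (1 / b / (a / b)) a :=
    h1.log (by positivity)
  have h3 : HasDerivAt (fun y : ℝ => y * Real.log (y / b))
      (1 * Real.log (a / b) + a * (1 / b / (a / b))) a := by
    simpa using (hasDerivAt_id a).fun_mul h2
  have h4 := (h3.add_const b).fun_sub (hasDerivAt_id a)
  have e : a * (1 / b / (a / b)) = 1 := by field_simp
  exact h4.congr_deriv (by linarith)

/-- Along every componentwise positive solution of the closed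
compartmental reaction–diffusion model, the total free energy
`G_d(X(t)) = ∑_k m0_k G(x^k(t))`, with `G(x) = ∑ i (x_i log(x_i/x*_i) + x*_i − x_i)`,
is differentiable with nonpositive derivative at every `t ≥ 0`. -/
theorem stmt_13 (m c r : ℕ) (hm : 0 < m) (hc : 0 < c) (hr : 0 < r)
    (hd tl : Fin r → Fin c) (hht : ∀ j, hd j ≠ tl j)
    (B : Matrix (Fin c) (Fin r) ℝ)
    (hB : ∀ i j, B i j = if i = hd j then 1 else if i = tl j then -1 else 0)
    (κ : Fin r → ℝ) (hκ : ∀ j, 0 < κ j)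
    (Z : Matrix (Fin m) (Fin c) ℝ)
    (xs : Fin m → ℝ) (hxs : ∀ i, 0 < xs i)
    (N Ne : ℕ) (hN : 0 < N) (hNe : 0 < Ne)
    (D : Matrix (Fin Ne) (Fin N) ℝ)
    (hD : ∀ j, ∃ p q : Fin N, p ≠ q ∧ D j p = 1 ∧ D j q = -1 ∧
      ∀ l, l ≠ p → l ≠ q → D j l = 0)
    (m0 : Fin N → ℝ) (hm0 : ∀ k, 0 < m0 k)
    (m1 : Fin Ne → ℝ) (hm1 : ∀ j, 0 < m1 j)
    (rr : Fin Ne → Fin m → (Fin N → Fin m → ℝ) → ℝ)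
    (hrcont : ∀ j i, Continuous (rr j i))
    (α : ℝ) (hα : 0 < α) (hrα : ∀ j i X, α ≤ rr j i X)
    (x : ℝ → Fin N → Fin m → ℝ)
    (hpos : ∀ t ∈ Set.Ici (0 : ℝ), ∀ k i, 0 < x t k i)
    (hode : ∀ t ∈ Set.Ici (0 : ℝ), ∀ k i,
      HasDerivWithinAt (fun s => x s k i)
        (-(1 / m0 k) * ∑ j, D j k * m1 j * rr j i (x t) * (∑ l, D j l * (x t l i / xs i))
          + (-(Z * B * Matrix.diagonal κ * Bᵀ).mulVec
              (fun ρ => Real.exp (Zᵀ.mulVec (fun i' => Real.log (x t k i' / xs i')) ρ))) i)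
        (Set.Ici (0 : ℝ)) t) :
    ∀ t ∈ Set.Ici (0 : ℝ), ∃ d : ℝ, d ≤ 0 ∧
      HasDerivWithinAt
        (fun s => ∑ k, m0 k * ∑ i, (x s k i * Real.log (x s k i / xs i) + xs i - x s k i))
        d (Set.Ici (0 : ℝ)) t := by
  intro t ht
  set v : Fin N → Fin m → ℝ := fun k i =>
    -(1 / m0 k) * ∑ j, D j k * m1 j * rr j i (x t) * (∑ l, D j l * (x t l i / xs i))
      + (-(Z * B * Matrix.diagonal κ * Bᵀ).mulVec
          (fun ρ => Real.exp (Zᵀ.mulVec (fun i' => Real.log (x t k i' / xs i')) ρ))) i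
    with hv
  refine ⟨∑ k, m0 k * ∑ i, Real.log (x t k i / xs i) * v k i, ?_, ?_⟩
  · -- nonpositivity
    have hsplit : (∑ k, m0 k * ∑ i, Real.log (x t k i / xs i) * v k i)
        = (∑ k, m0 k * ∑ i, Real.log (x t k i / xs i) *
            (-(1 / m0 k) * ∑ j, D j k * m1 j * rr j i (x t) *
              (∑ l, D j l * (x t l i / xs i))))
          + (∑ k, m0 k * ∑ i, Real.log (x t k i / xs i) *
            ((-(Z * B * Matrix.diagonal κ * Bᵀ).mulVec
              (fun ρ => Real.exp (Zᵀ.mulVec (fun i' => Real.log (x t k i' / xs i')) ρ))) i)) := by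
      simp only [hv, mul_add, Finset.sum_add_distrib]
    rw [hsplit]
    have hA : (∑ k, m0 k * ∑ i, Real.log (x t k i / xs i) *
        (-(1 / m0 k) * ∑ j, D j k * m1 j * rr j i (x t) *
          (∑ l, D j l * (x t l i / xs i)))) ≤ 0 := by
      have step1 : (∑ k, m0 k * ∑ i, Real.log (x t k i / xs i) *
          (-(1 / m0 k) * ∑ j, D j k * m1 j * rr j i (x t) *
            (∑ l, D j l * (x t l i / xs i))))
          = ∑ k, ∑ i, ∑ j, -(Real.log (x t k i / xs i) *
              (D j k * m1 j * rr j i (x t) * (∑ l, D j l * (x t l i / xs i)))) := by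
        refine Finset.sum_congr rfl fun k _ => ?_
        rw [Finset.mul_sum]
        refine Finset.sum_congr rfl fun i _ => ?_
        have hm0k : m0 k ≠ 0 := (hm0 k).ne'
        have key : ∀ a w : ℝ, m0 k * (a * (-(1 / m0 k) * w)) = -(a * w) := by
          intro a w; field_simp
        rw [key, Finset.mul_sum, ← Finset.sum_neg_distrib]
      rw [step1]
      have swap3 : ∀ (F : Fin N → Fin m → Fin Ne → ℝ),
          ∑ k, ∑ i, ∑ j, F k i j = ∑ j, ∑ i, ∑ k, F k i j := by
        intro F
        calc ∑ k, ∑ i, ∑ j, F k i j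
            = ∑ k, ∑ j, ∑ i, F k i j := Finset.sum_congr rfl fun k _ => Finset.sum_comm
          _ = ∑ j, ∑ k, ∑ i, F k i j := Finset.sum_comm
          _ = ∑ j, ∑ i, ∑ k, F k i j := Finset.sum_congr rfl fun j _ => Finset.sum_comm
      rw [swap3]
      apply Finset.sum_nonpos
      intro j _
      apply Finset.sum_nonpos
      intro i _
      obtain ⟨p, q, hpq, hp, hq, h0⟩ := hD j
      have hre : (∑ k, -(Real.log (x t k i / xs i) *
            (D j k * m1 j * rr j i (x t) * (∑ l, D j l * (x t l i / xs i)))))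
          = ∑ k, D j k * (Real.log (x t k i / xs i) *
              (-(m1 j * rr j i (x t) * (∑ l, D j l * (x t l i / xs i))))) :=
        Finset.sum_congr rfl fun k _ => by ring
      rw [hre, sum_pm hpq hp hq h0]
      have hS : (∑ l, D j l * (x t l i / xs i)) = x t p i / xs i - x t q i / xs i :=
        sum_pm hpq hp hq h0
      rw [hS]
      have hu : 0 < x t p i / xs i := div_pos (hpos t ht p i) (hxs i)
      have hv' : 0 < x t q i / xs i := div_pos (hpos t ht q i) (hxs i)
      have hTS := log_mul_nonneg hu hv'
      have hmr : 0 ≤ m1 j * rr j i (x t) :=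
        mul_nonneg (hm1 j).le ((hα.trans_le (hrα j i (x t))).le)
      have hdiv : Real.log (x t p i / xs i) = Real.log (x t p i / xs i) := rfl
      nlinarith [mul_nonneg hmr hTS]
    have hB2 : (∑ k, m0 k * ∑ i, Real.log (x t k i / xs i) *
        ((-(Z * B * Matrix.diagonal κ * Bᵀ).mulVec
          (fun ρ => Real.exp (Zᵀ.mulVec (fun i' => Real.log (x t k i' / xs i')) ρ))) i)) ≤ 0 := by
      apply Finset.sum_nonpos
      intro k _
      have hr' := reaction_nonneg hht B hB κ hκ Z (fun i' => Real.log (x t k i' / xs i'))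
      have hinner : (∑ i, Real.log (x t k i / xs i) *
          ((-(Z * B * Matrix.diagonal κ * Bᵀ).mulVec
            (fun ρ => Real.exp (Zᵀ.mulVec (fun i' => Real.log (x t k i' / xs i')) ρ))) i)) ≤ 0 := by
        have : (∑ i, Real.log (x t k i / xs i) *
            ((-(Z * B * Matrix.diagonal κ * Bᵀ).mulVec
              (fun ρ => Real.exp (Zᵀ.mulVec (fun i' => Real.log (x t k i' / xs i')) ρ))) i))
            = -∑ i, Real.log (x t k i / xs i) *
              (((Z * B * Matrix.diagonal κ * Bᵀ).mulVec
                (fun ρ => Real.exp (Zᵀ.mulVec (fun i' => Real.log (x t k i' / xs i')) ρ))) i) := by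
          simp [mul_neg, Finset.sum_neg_distrib]
        rw [this]
        exact neg_nonpos.mpr hr'
      exact mul_nonpos_of_nonneg_of_nonpos (hm0 k).le hinner
    linarith
  · -- differentiability
    have hterm : ∀ k i, HasDerivWithinAt
        (fun s => x s k i * Real.log (x s k i / xs i) + xs i - x s k i)
        (Real.log (x t k i / xs i) * v k i) (Set.Ici 0) t := by
      intro k i
      have hg := gHasDeriv (hxs i) (hpos t ht k i)
      have hcomp := hg.comp_hasDerivWithinAt t (hode t ht k i)
      simpa [Function.comp_def, hv] using hcomp
    have hk : ∀ k, HasDerivWithinAt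
        (fun s => m0 k * ∑ i, (x s k i * Real.log (x s k i / xs i) + xs i - x s k i))
        (m0 k * ∑ i, Real.log (x t k i / xs i) * v k i) (Set.Ici 0) t :=
      fun k => (HasDerivWithinAt.fun_sum fun i _ => hterm k i).const_mul (m0 k)
    exact HasDerivWithinAt.fun_sum fun k _ => hk k
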